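/- arXiv:1308.4698 — 2 statements merged into one kernel-verified Lean document; each statement's English description precedes it below -/
import Mathlib

section
/- Let Θ be the category of finite sets with injections and 𝒜 an abelian category. A functor F : Θ → 𝒜 is strongly polynomial of degree at most d if and only if the set {0, 1, …, d} (the sets of cardinality ≤ d) is a support of F. In particular, F is strongly polynomial if and only if F has finite support. -/
open CategoryTheory CategoryTheory.Limits
universe v u

/-- The category `Θ` of finite sets with injections, with skeletal objects `ℕ`
(the object `n` standing for `{1,…,n}`) and morphisms the injections. -/
def Theta : Type := ℕ

/-- The object of `Θ` corresponding to a natural number. -/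
def Theta.mk (n : ℕ) : Theta := n

/-- The cardinality of an object of `Θ`. -/
def Theta.card (n : Theta) : ℕ := n

instance : Category.{0} Theta where
  Hom m n := Fin m.card ↪ Fin n.card
  id _ := Function.Embedding.refl _
  comp f g := f.trans g

/-- The endofunctor `x ⊔ −` of `Θ` (disjoint union with a fixed finite set `x` on the
left). -/
def sh (x : ℕ) : Theta ⥤ Theta where
  obj n := Theta.mk (x + n.card)
  map {m n} f :=
    (finSumFinEquiv.symm.toEmbedding.trans
      ((Function.Embedding.refl (Fin x)).sumMap f)).trans finSumFinEquiv.toEmbedding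
  map_id := by
    intro n
    apply Function.Embedding.ext
    intro i
    show finSumFinEquiv (Sum.map _ _ (finSumFinEquiv.symm i)) = i
    conv_rhs => rw [← Equiv.apply_symm_apply finSumFinEquiv i]
    congr 1
    generalize finSumFinEquiv.symm i = s
    rcases s with j | j <;> rfl
  map_comp := by
    intro a b c f g
    apply Function.Embedding.ext
    intro i
    show finSumFinEquiv (Sum.map _ _ (finSumFinEquiv.symm i)) =
      finSumFinEquiv (Sum.map _ _
        (finSumFinEquiv.symm (finSumFinEquiv (Sum.map _ _ (finSumFinEquiv.symm i)))))
    rw [Equiv.symm_apply_apply]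
    congr 1
    generalize finSumFinEquiv.symm i = s
    rcases s with j | j <;> rfl

/-- A morphism of `Θ` seen as an embedding. -/
def homEmb {m n : Theta} (f : m ⟶ n) : Fin m.card ↪ Fin n.card := f

/-- The canonical injection `n → x ⊔ n` in `Θ`, induced by the unique map from the empty
set (initial object) to `x`. -/
def canIncl (x : ℕ) (n : Theta) : n ⟶ (sh x).obj n :=
  (Fin.natAddOrderEmb x).toEmbedding

lemma canIncl_natural (x : ℕ) {m n : Theta} (f : m ⟶ n) :
    canIncl x m ≫ (sh x).map f = f ≫ canIncl x n := by
  apply Function.Embedding.ext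
  intro i
  show finSumFinEquiv (Sum.map _ _ (finSumFinEquiv.symm (Fin.natAdd x i))) =
    Fin.natAdd x (homEmb f i)
  rw [finSumFinEquiv_symm_apply_natAdd]
  rfl

variable {𝒜 : Type u} [Category.{v} 𝒜]

/-- The natural transformation `i_x : F ⟶ τ_x F = F(x ⊔ −)` induced by the canonical
inclusions `n → x ⊔ n`. -/
def iNat (x : ℕ) (F : Theta ⥤ 𝒜) : F ⟶ sh x ⋙ F where
  app n := F.map (canIncl x n)
  naturality := by
    intro m n f
    dsimp
    rw [← F.map_comp, ← F.map_comp, canIncl_natural]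

/-- `δ_x F`, the cokernel of `i_x : F ⟶ τ_x F`. -/
noncomputable def del [Abelian 𝒜] (x : ℕ) (F : Theta ⥤ 𝒜) : Theta ⥤ 𝒜 :=
  cokernel (iNat x F)

/-- `F : Θ ⥤ 𝒜` is strongly polynomial of degree at most `d` if every `(d+1)`-fold
iterated `δ` of `F` vanishes. -/
noncomputable def StronglyPolynomialLE [Abelian 𝒜] (d : ℕ) (F : Theta ⥤ 𝒜) : Prop :=
  ∀ l : List ℕ, l.length = d + 1 → IsZero (l.foldr del F)

instance (m n : Theta) : Finite (m ⟶ n) :=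
  inferInstanceAs (Finite (Fin m.card ↪ Fin n.card))

/-- The functor `A[Θ(t,−)]`. -/
noncomputable def rep [Abelian 𝒜] (t : ℕ) (A : 𝒜) : Theta ⥤ 𝒜 where
  obj c := ∐ fun (_ : Theta.mk t ⟶ c) => A
  map {c d} f := Sigma.desc fun g => Sigma.ι (fun (_ : Theta.mk t ⟶ d) => A) (g ≫ f)

/-- A set `S` of objects is a *support* of `F` if every subfunctor of `F` agreeing with
`F` on all objects of `S` is all of `F`. -/
def IsSupport {C : Type*} [Category C] {𝒟 : Type*} [Category 𝒟]
    (S : Set C) (F : C ⥤ 𝒟) : Prop :=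
  ∀ (G : C ⥤ 𝒟) (i : G ⟶ F), Mono i → (∀ s ∈ S, IsIso (i.app s)) → IsIso i


/-! ### Auxiliary development for the proof -/

namespace ThetaSupportProof

attribute [local instance] Abelian.hasFiniteBiproducts

variable {𝒜 : Type u} [Category.{v} 𝒜] [Abelian 𝒜]

/-! #### Basic `Theta` lemmas -/

lemma theta_hom_ext {m n : Theta} {f g : m ⟶ n}
    (h : ∀ x, homEmb f x = homEmb g x) : f = g :=
  Function.Embedding.ext h

lemma theta_comp_apply {a b c : Theta} (f : a ⟶ b) (g : b ⟶ c) (x : Fin a.card) :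
    homEmb (f ≫ g) x = homEmb g (homEmb f x) := rfl

lemma canIncl_apply (x : ℕ) (n : Theta) (i : Fin n.card) :
    homEmb (canIncl x n) i = Fin.natAdd x i := rfl

lemma sh_map_apply (x : ℕ) {m n : Theta} (f : m ⟶ n) (z : Fin ((sh x).obj m).card) :
    homEmb ((sh x).map f) z =
      finSumFinEquiv (Sum.map id (homEmb f) (finSumFinEquiv.symm z)) := rfl

lemma iNat_app (x : ℕ) (F : Theta ⥤ 𝒜) (n : Theta) :
    (iNat x F).app n = F.map (canIncl x n) := rfl

/-- Factor an embedding through another one containing its range. -/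
lemma exists_emb_factor {α β γ : Type} (f : α ↪ β) (e : γ ↪ β)
    (h : Set.range f ⊆ Set.range e) : ∃ h' : α ↪ γ, ∀ x, e (h' x) = f x := by
  choose g hg using fun x => h (Set.mem_range_self x)
  exact ⟨⟨g, fun a b hab => f.injective (by rw [← hg, ← hg, hab])⟩, hg⟩

/-- Any finset of `Fin n` of cardinality at most `k ≤ n` is contained in the range of an
embedding `Fin k ↪ Fin n`. -/
lemma exists_emb_superset {n k : ℕ} (S : Finset (Fin n)) (h1 : S.card ≤ k) (h2 : k ≤ n) :
    ∃ g : Fin k ↪ Fin n, ∀ x ∈ S, x ∈ Set.range g := by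
  obtain ⟨T, hST, hT⟩ := Finset.exists_superset_card_eq h1 (by simpa using h2)
  refine ⟨(T.orderEmbOfFin hT).toEmbedding, fun x hx => ?_⟩
  have : (x : Fin n) ∈ Set.range (T.orderEmbOfFin hT) := by
    rw [Finset.range_orderEmbOfFin]
    exact_mod_cast hST hx
  exact this

/-! #### Zero-object lemmas -/

lemma isZero_tgt {ℬ : Type*} [Category ℬ] [HasZeroMorphisms ℬ]
    {X Y : ℬ} (p : X ⟶ Y) [Epi p] (h : p = 0) : IsZero Y := by
  rw [IsZero.iff_id_eq_zero, ← cancel_epi p, h]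
  simp

lemma isZero_del_of_isZero (x : ℕ) {G : Theta ⥤ 𝒜} (h : IsZero G) : IsZero (del x G) := by
  refine @isZero_tgt _ _ _ _ _ (cokernel.π (iNat x G)) coequalizer.π_epi ?_
  have hz : IsZero (sh x ⋙ G) :=
    Functor.isZero _ fun n => (G.isZero_iff.mp h) _
  exact hz.eq_of_src _ _

lemma isZero_foldr_of_isZero {G : Theta ⥤ 𝒜} (h : IsZero G) (l : List ℕ) :
    IsZero (l.foldr del G) := by
  induction l with
  | nil => exact h
  | cons a l ih => exact isZero_del_of_isZero a ih

lemma isIso_canIncl_zero (n : Theta) : IsIso (canIncl 0 n) := by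
  refine ⟨(finCongr (Nat.zero_add n.card)).toEmbedding, ?_, ?_⟩
  · refine theta_hom_ext fun x => ?_
    apply Fin.ext
    show ((0 : ℕ) + (x : ℕ)) = (x : ℕ)
    omega
  · refine theta_hom_ext fun x => ?_
    apply Fin.ext
    show ((0 : ℕ) + ((x : ℕ) : ℕ)) = (x : ℕ)
    omega

lemma isZero_del_zero (F : Theta ⥤ 𝒜) : IsZero (del 0 F) := by
  have happ : ∀ n : Theta, Epi ((iNat 0 F).app n) := fun n => by
    have : IsIso (canIncl 0 n) := isIso_canIncl_zero n
    have : IsIso (F.map (canIncl 0 n)) := inferInstance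
    rw [iNat_app]
    infer_instance
  have : Epi (iNat 0 F) := @NatTrans.epi_of_epi_app _ _ _ _ _ _ _ happ
  exact @isZero_tgt _ _ _ _ _ (cokernel.π (iNat 0 F)) coequalizer.π_epi (cokernel.π_of_epi _)

/-! #### The generation condition -/

/-- `Gen d F` : every morphism out of a value of `F` which kills all the images coming
from objects of cardinality at most `d` vanishes. -/
def Gen (d : ℕ) (F : Theta ⥤ 𝒜) : Prop :=
  ∀ (n : Theta) ⦃Q : 𝒜⦄ (q : F.obj n ⟶ Q),
    (∀ (m : Theta), m.card ≤ d → ∀ f : m ⟶ n, F.map f ≫ q = 0) → q = 0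

lemma gen_of_isZero {d : ℕ} {F : Theta ⥤ 𝒜} (h : IsZero F) : Gen d F := by
  intro n Q q _
  exact ((F.isZero_iff.mp h) n).eq_of_src _ _

/-! #### Strongly polynomial implies generated (via iterated `del 1`) -/

/-- `k`-fold application of `del 1`. -/
noncomputable def delIter (F : Theta ⥤ 𝒜) : ℕ → Theta ⥤ 𝒜
  | 0 => F
  | k + 1 => del 1 (delIter F k)

lemma delIter_eq (F : Theta ⥤ 𝒜) (k : ℕ) :
    (List.replicate k 1).foldr del F = delIter F k := by
  induction k with
  | zero => rfl
  | succ k ih => rw [List.replicate_succ, List.foldr_cons, ih]; rfl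

/-- `k`-fold application of `sh 1`. -/
def shIter : ℕ → Theta ⥤ Theta
  | 0 => 𝟭 _
  | k + 1 => sh 1 ⋙ shIter k

lemma shIter_card (k : ℕ) (n : Theta) : ((shIter k).obj n).card = k + n.card := by
  induction k generalizing n with
  | zero => show n.card = 0 + n.card; omega
  | succ k ih =>
    show ((shIter k).obj ((sh 1).obj n)).card = (k + 1) + n.card
    rw [ih]
    show k + (1 + n.card) = (k + 1) + n.card
    omega

/-- The canonical epimorphism `F ∘ (shIter k) ⟶ delIter F k`. -/
noncomputable def Pnat (F : Theta ⥤ 𝒜) : ∀ k : ℕ, (shIter k ⋙ F) ⟶ delIter F k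
  | 0 => (Functor.leftUnitor F).hom
  | k + 1 => Functor.whiskerLeft (sh 1) (Pnat F k) ≫ cokernel.π (iNat 1 (delIter F k))

lemma Pnat_app_epi (F : Theta ⥤ 𝒜) : ∀ (k : ℕ) (n : Theta), Epi ((Pnat F k).app n) := by
  intro k
  induction k with
  | zero => intro n; show Epi (𝟙 (F.obj n)); infer_instance
  | succ k ih =>
    intro n
    have h1 := ih ((sh 1).obj n)
    have h2 : Epi ((cokernel.π (iNat 1 (delIter F k))).app n) := inferInstance
    show Epi ((Pnat F k).app ((sh 1).obj n) ≫ (cokernel.π (iNat 1 (delIter F k))).app n)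
    exact epi_comp _ _

lemma Pnat_fac (F : Theta ⥤ 𝒜) :
    ∀ (k : ℕ) (n : Theta) {Q : 𝒜} (q : F.obj ((shIter k).obj n) ⟶ Q),
      (∀ (m : Theta), m.card < ((shIter k).obj n).card →
        ∀ e : m ⟶ (shIter k).obj n, F.map e ≫ q = 0) →
      ∃ q', q = (Pnat F k).app n ≫ q' := by
  intro k
  induction k with
  | zero => intro n Q q _; exact ⟨q, by show q = 𝟙 _ ≫ q; simp⟩
  | succ k ih =>
    intro n Q q hq
    obtain ⟨q', hq'⟩ := ih ((sh 1).obj n) q hq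
    have hPepi := Pnat_app_epi F k n
    have hcond : (iNat 1 (delIter F k)).app n ≫ q' = 0 := by
      rw [← cancel_epi ((Pnat F k).app n), comp_zero, ← Category.assoc]
      have hnat := (Pnat F k).naturality (canIncl 1 n)
      rw [iNat_app, ← hnat, Category.assoc, ← hq']
      have hcard : ((shIter k).obj n).card < ((shIter k).obj ((sh 1).obj n)).card := by
        rw [shIter_card, shIter_card]
        show k + n.card < k + (1 + n.card)
        omega
      exact hq ((shIter k).obj n) hcard ((shIter k).map (canIncl 1 n))
    have hcolim := isColimitOfHasCokernelOfPreservesColimit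
      ((evaluation Theta 𝒜).obj n) (iNat 1 (delIter F k))
    obtain ⟨q'', hq''⟩ := CokernelCofork.IsColimit.desc' hcolim q' hcond
    refine ⟨q'', ?_⟩
    have hev : (cokernel.π (iNat 1 (delIter F k))).app n ≫ q'' = q' := hq''
    have hP : (Pnat F (k + 1)).app n =
        (Pnat F k).app ((sh 1).obj n) ≫ (cokernel.π (iNat 1 (delIter F k))).app n := rfl
    rw [hP]
    exact hq'.trans (by rw [← hev]; exact (Category.assoc _ _ _).symm)

lemma sp_killsSmall {d : ℕ} {F : Theta ⥤ 𝒜} (hsp : StronglyPolynomialLE d F)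
    (t : Theta) (ht : d < t.card) {Q : 𝒜} (q : F.obj t ⟶ Q)
    (hq : ∀ (m : Theta), m.card < t.card → ∀ e : m ⟶ t, F.map e ≫ q = 0) : q = 0 := by
  have hz : IsZero (delIter F (d + 1)) := by
    have := hsp (List.replicate (d + 1) 1) (by simp)
    rwa [delIter_eq] at this
  obtain ⟨n0, hobj⟩ : ∃ n0 : Theta, (shIter (d + 1)).obj n0 = t := by
    refine ⟨Theta.mk (t.card - (d + 1)), ?_⟩
    have h1 : ((shIter (d + 1)).obj (Theta.mk (t.card - (d + 1)))).card = t.card := by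
      rw [shIter_card]
      show (d + 1) + (t.card - (d + 1)) = t.card
      omega
    exact h1
  subst hobj
  obtain ⟨q', hq'⟩ := Pnat_fac F (d + 1) n0 q hq
  rw [hq']
  have : q' = 0 := ((delIter F (d + 1)).isZero_iff.mp hz _).eq_of_src _ _
  rw [this, comp_zero]

lemma sp_gen {d : ℕ} {F : Theta ⥤ 𝒜} (hsp : StronglyPolynomialLE d F) : Gen d F := by
  have key : ∀ N : ℕ, ∀ n : Theta, n.card = N → ∀ {Q : 𝒜} (q : F.obj n ⟶ Q),
      (∀ (m : Theta), m.card ≤ d → ∀ f : m ⟶ n, F.map f ≫ q = 0) → q = 0 := by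
    intro N
    induction N using Nat.strong_induction_on with
    | _ N IH =>
      intro n hn Q q hq
      by_cases hNd : N ≤ d
      · have := hq n (by omega) (𝟙 n)
        rwa [F.map_id, Category.id_comp] at this
      · refine sp_killsSmall hsp n (by omega) q ?_
        intro m hm e
        refine IH m.card (by omega) m rfl (F.map e ≫ q) ?_
        intro m' hm' f
        rw [← Category.assoc, ← F.map_comp]
        exact hq m' hm' (f ≫ e)
  intro n Q q hq
  exact key n.card n rfl q hq

/-! #### Generated implies support -/

lemma gen_isSupport {d : ℕ} {F : Theta ⥤ 𝒜} (hgen : Gen d F) :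
    IsSupport {n : Theta | n.card ≤ d} F := by
  intro G i hmono hiso
  have happ : ∀ n : Theta, IsIso (i.app n) := by
    intro n
    have hm : Mono (i.app n) := inferInstance
    have he : Epi (i.app n) := by
      apply Abelian.epi_of_cokernel_π_eq_zero
      apply hgen n
      intro m hm' f
      have hiso' := hiso m hm'
      have hfac : F.map f = inv (i.app m) ≫ G.map f ≫ i.app n := by
        rw [i.naturality f, IsIso.inv_hom_id_assoc]
      rw [hfac, Category.assoc, Category.assoc, cokernel.condition, comp_zero, comp_zero]
    exact isIso_of_mono_of_epi _
  exact NatIso.isIso_of_isIso_app i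

/-! #### Support implies generated -/

/-- The index type of the generating biproduct. -/
abbrev GenIdx (d : ℕ) (n : Theta) : Type := Σ m : Fin (d + 1), (Theta.mk m.1 ⟶ n)

instance (d : ℕ) (n : Theta) : Finite (GenIdx d n) := by
  unfold GenIdx; infer_instance

/-- The canonical morphism from the biproduct of small values to `F n`. -/
noncomputable def genMap (d : ℕ) (F : Theta ⥤ 𝒜) (n : Theta) :
    (⨁ fun i : GenIdx d n => F.obj (Theta.mk i.1.1)) ⟶ F.obj n :=
  biproduct.desc fun i => F.map i.2

lemma genMap_comp_zero {d : ℕ} {F : Theta ⥤ 𝒜} {n n' : Theta} (u : n ⟶ n')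
    {R : 𝒜} (r : F.obj n' ⟶ R) (hr : genMap d F n' ≫ r = 0) :
    genMap d F n ≫ F.map u ≫ r = 0 := by
  apply biproduct.hom_ext'
  intro j
  rw [comp_zero, genMap, biproduct.ι_desc_assoc, ← F.map_comp_assoc]
  have : F.map (j.2 ≫ u) = biproduct.ι (fun i : GenIdx d n' => F.obj (Theta.mk i.1.1))
      ⟨j.1, j.2 ≫ u⟩ ≫ genMap d F n' := by
    rw [genMap, biproduct.ι_desc]
  rw [this, Category.assoc, hr, comp_zero]

/-- The map between images induced by a morphism. -/
noncomputable def genSubMap (d : ℕ) (F : Theta ⥤ 𝒜) {n n' : Theta} (u : n ⟶ n') :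
    Abelian.image (genMap d F n) ⟶ Abelian.image (genMap d F n') :=
  kernel.lift (cokernel.π (genMap d F n'))
    (Abelian.image.ι (genMap d F n) ≫ F.map u)
    (by
      rw [← cancel_epi (Abelian.factorThruImage (genMap d F n)), comp_zero,
        ← Category.assoc, ← Category.assoc, Abelian.image.fac, Category.assoc]
      exact genMap_comp_zero u _ (cokernel.condition _))

lemma genSubMap_ι (d : ℕ) (F : Theta ⥤ 𝒜) {n n' : Theta} (u : n ⟶ n') :
    genSubMap d F u ≫ Abelian.image.ι (genMap d F n') =
      Abelian.image.ι (genMap d F n) ≫ F.map u :=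
  kernel.lift_ι _ _ _

/-- The subfunctor of `F` generated by the values of cardinality at most `d`. -/
noncomputable def genSub (d : ℕ) (F : Theta ⥤ 𝒜) : Theta ⥤ 𝒜 where
  obj n := Abelian.image (genMap d F n)
  map {n n'} u := genSubMap d F u
  map_id n := by
    rw [← cancel_mono (Abelian.image.ι (genMap d F n)), genSubMap_ι, F.map_id,
      Category.comp_id, Category.id_comp]
  map_comp {n n' n''} u v := by
    rw [← cancel_mono (Abelian.image.ι (genMap d F n'')), genSubMap_ι, Category.assoc,
      genSubMap_ι, ← Category.assoc, genSubMap_ι, Category.assoc, ← F.map_comp]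

/-- The inclusion of the generated subfunctor. -/
noncomputable def genSubIncl (d : ℕ) (F : Theta ⥤ 𝒜) : genSub d F ⟶ F where
  app n := Abelian.image.ι (genMap d F n)
  naturality {n n'} u := genSubMap_ι d F u

lemma support_gen {d : ℕ} {F : Theta ⥤ 𝒜}
    (hsupp : IsSupport {n : Theta | n.card ≤ d} F) : Gen d F := by
  have hmonoapp : ∀ n : Theta, Mono ((genSubIncl d F).app n) := fun n =>
    inferInstanceAs (Mono (Abelian.image.ι (genMap d F n)))
  have hmono : Mono (genSubIncl d F) := NatTrans.mono_of_mono_app _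
  have hiso : IsIso (genSubIncl d F) := by
    apply hsupp _ _ hmono
    intro s hs
    have hsplit : biproduct.ι (fun i : GenIdx d s => F.obj (Theta.mk i.1.1))
        ⟨⟨s.card, Nat.lt_succ_of_le hs⟩, 𝟙 s⟩ ≫ genMap d F s = 𝟙 (F.obj s) := by
      rw [genMap, biproduct.ι_desc]
      exact F.map_id s
    have hepi : Epi (genMap d F s) := by
      have : IsSplitEpi (genMap d F s) :=
        IsSplitEpi.mk' ⟨biproduct.ι (fun i : GenIdx d s => F.obj (Theta.mk i.1.1))
          ⟨⟨s.card, Nat.lt_succ_of_le hs⟩, 𝟙 s⟩, hsplit⟩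
      exact inferInstance
    have hepi' : Epi ((genSubIncl d F).app s) := by
      have hfac : Abelian.factorThruImage (genMap d F s) ≫ (genSubIncl d F).app s =
          genMap d F s := Abelian.image.fac _
      have : Epi (Abelian.factorThruImage (genMap d F s) ≫ (genSubIncl d F).app s) := by
        rw [hfac]; exact hepi
      exact epi_of_epi (Abelian.factorThruImage (genMap d F s)) _
    exact isIso_of_mono_of_epi _
  intro n Q q hq
  have happiso : IsIso ((genSubIncl d F).app n) := inferInstance
  have hepi : Epi (genMap d F n) := by
    have hfac : Abelian.factorThruImage (genMap d F n) ≫ (genSubIncl d F).app n =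
        genMap d F n := Abelian.image.fac _
    rw [← hfac]
    exact @epi_comp _ _ _ _ _ _ inferInstance _ (@IsIso.epi_of_iso _ _ _ _ _ happiso)
  rw [← cancel_epi (genMap d F n), comp_zero]
  apply biproduct.hom_ext'
  intro j
  rw [genMap, biproduct.ι_desc_assoc, comp_zero]
  exact hq (Theta.mk j.1.1) (Nat.lt_succ_iff.mp j.1.2) j.2

/-! #### Generated implies strongly polynomial -/

lemma gen_zero_sp {F : Theta ⥤ 𝒜} (hgen : Gen 0 F) : StronglyPolynomialLE 0 F := by
  intro l hl
  obtain ⟨a, rfl⟩ := List.length_eq_one_iff.mp hl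
  show IsZero (del a F)
  refine @isZero_tgt _ _ _ _ _ (cokernel.π (iNat a F)) coequalizer.π_epi ?_
  ext n
  show (cokernel.π (iNat a F)).app n = 0
  apply hgen ((sh a).obj n)
  intro m hm f
  have hempty : IsEmpty (Fin m.card) := by
    have : m.card = 0 := Nat.le_zero.mp hm
    rw [this]; infer_instance
  have hfac : f = (Function.Embedding.ofIsEmpty : Fin m.card ↪ Fin n.card) ≫ canIncl a n :=
    theta_hom_ext fun x => hempty.elim x
  rw [hfac, F.map_comp, Category.assoc, ← iNat_app]
  have : (iNat a F).app n ≫ (cokernel.π (iNat a F)).app n = 0 := by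
    rw [← NatTrans.comp_app, cokernel.condition]
    simp
  rw [this, comp_zero]

/-- The key combinatorial step : if `F` is generated in cardinalities `≤ d + 1` then
`del (b+1) F` is generated in cardinalities `≤ d`. -/
lemma gen_del {d : ℕ} {F : Theta ⥤ 𝒜} (hgen : Gen (d + 1) F) (b : ℕ) :
    Gen d (del (b + 1) F) := by
  set a := b + 1 with ha
  intro n Q q hq
  change ((cokernel (iNat a F)).obj n ⟶ Q) at q
  set π := cokernel.π (iNat a F) with hπ
  have hπepi : Epi (π.app n) := inferInstance
  refine (cancel_epi (π.app n)).mp ((?_ : π.app n ≫ q = 0).trans comp_zero.symm)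
  apply hgen ((sh a).obj n)
  intro m hm f
  by_cases hcase : ∀ x : Fin m.card, a ≤ (homEmb f x : ℕ)
  · -- `f` factors through the canonical inclusion, so it dies in the cokernel
    have hbound : ∀ x : Fin m.card, (homEmb f x : ℕ) - a < n.card := by
      intro x
      have := (homEmb f x).isLt
      have h2 := hcase x
      show _ < n.card
      have : (homEmb f x : ℕ) < a + n.card := this
      omega
    have hinj : Function.Injective fun x : Fin m.card =>
        (⟨(homEmb f x : ℕ) - a, hbound x⟩ : Fin n.card) := by
      intro x y hxy
      have hval : ((homEmb f x : ℕ) - a) = ((homEmb f y : ℕ) - a) := congrArg Fin.val hxy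
      have h1 := hcase x
      have h2 := hcase y
      exact (homEmb f).injective (Fin.ext (by omega))
    set h : m ⟶ n := ⟨fun x => ⟨(homEmb f x : ℕ) - a, hbound x⟩, hinj⟩ with hh
    have hfac : f = h ≫ canIncl a n := by
      refine theta_hom_ext fun x => ?_
      apply Fin.ext
      show (homEmb f x : ℕ) = a + ((homEmb f x : ℕ) - a)
      have := hcase x
      omega
    rw [hfac, F.map_comp, Category.assoc, ← iNat_app]
    have hz : (iNat a F).app n ≫ π.app n = 0 := by
      rw [hπ, ← NatTrans.comp_app, cokernel.condition]
      simp
    rw [reassoc_of% hz, zero_comp, comp_zero]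
  · -- `f` factors through `(sh a).map g` for some `g` from a small object
    push_neg at hcase
    obtain ⟨x0, hx0⟩ := hcase
    -- the trace of `f` on the last `n.card` coordinates
    classical
    set R : Finset (Fin n.card) :=
      Finset.univ.filter (fun y => ∃ x, (homEmb f x : ℕ) = a + (y : ℕ)) with hR
    have hRcard : R.card ≤ d := by
      have : R.card ≤ (Finset.univ.erase x0).card := by
        refine Finset.card_le_card_of_injOn
          (fun y => if h : ∃ x, (homEmb f x : ℕ) = a + (y : ℕ) then h.choose else x0) ?_ ?_
        · intro y hy
          rw [hR, Finset.mem_coe, Finset.mem_filter] at hy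
          obtain ⟨-, hex⟩ := hy
          simp only [dif_pos hex, Finset.mem_coe]
          apply Finset.mem_erase_of_ne_of_mem _ (Finset.mem_univ _)
          intro hc
          have := hex.choose_spec
          rw [hc] at this
          omega
        · intro y1 h1 y2 h2 heq
          rw [hR, Finset.mem_coe, Finset.mem_filter] at h1 h2
          obtain ⟨-, hex1⟩ := h1
          obtain ⟨-, hex2⟩ := h2
          simp only [dif_pos hex1, dif_pos hex2] at heq
          have e1 := hex1.choose_spec
          have e2 := hex2.choose_spec
          apply Fin.ext
          rw [heq] at e1
          omega
      have hcard : (Finset.univ.erase x0).card = m.card - 1 := by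
        rw [Finset.card_erase_of_mem (Finset.mem_univ _)]
        simp
      rw [hcard] at this
      have hmcard : m.card ≤ d + 1 := hm
      omega
    have hRn : R.card ≤ n.card := by
      simpa using Finset.card_le_univ R
    obtain ⟨g, hg⟩ := exists_emb_superset R (le_min hRcard hRn) (min_le_right d n.card)
    set mg : Theta := Theta.mk (min d n.card) with hmg
    set g' : mg ⟶ n := g with hg'
    have hrange : Set.range (homEmb f) ⊆ Set.range (homEmb ((sh a).map g')) := by
      rintro y ⟨x, rfl⟩
      by_cases hxa : (homEmb f x : ℕ) < a
      · refine ⟨finSumFinEquiv (Sum.inl ⟨(homEmb f x : ℕ), hxa⟩), ?_⟩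
        show finSumFinEquiv (Sum.map id (homEmb g')
          (finSumFinEquiv.symm (finSumFinEquiv (Sum.inl ⟨(homEmb f x : ℕ), hxa⟩ :
            Fin a ⊕ Fin mg.card)))) = _
        rw [Equiv.symm_apply_apply]
        show finSumFinEquiv (Sum.inl _) = _
        rw [finSumFinEquiv_apply_left]
        apply Fin.ext
        rfl
      · push_neg at hxa
        have hlt : (homEmb f x : ℕ) - a < n.card := by
          have := (homEmb f x).isLt
          have : (homEmb f x : ℕ) < a + n.card := this
          omega
        set y0 : Fin n.card := ⟨(homEmb f x : ℕ) - a, hlt⟩ with hy0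
        have hy0R : y0 ∈ R := by
          rw [hR, Finset.mem_filter]
          exact ⟨Finset.mem_univ _, ⟨x, by show _ = a + ((homEmb f x : ℕ) - a); omega⟩⟩
        obtain ⟨z, hz⟩ := hg y0 hy0R
        refine ⟨finSumFinEquiv (Sum.inr z), ?_⟩
        show finSumFinEquiv (Sum.map id (homEmb g')
          (finSumFinEquiv.symm (finSumFinEquiv (Sum.inr z : Fin a ⊕ Fin mg.card)))) = _
        rw [Equiv.symm_apply_apply]
        show finSumFinEquiv (Sum.inr (homEmb g' z)) = _
        rw [finSumFinEquiv_apply_right]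
        apply Fin.ext
        show a + (homEmb g' z : ℕ) = (homEmb f x : ℕ)
        have : (homEmb g' z) = y0 := hz
        rw [this]
        show a + ((homEmb f x : ℕ) - a) = _
        omega
    obtain ⟨h, hhfac⟩ := exists_emb_factor (homEmb f) (homEmb ((sh a).map g')) hrange
    have hfac : f = (h : m ⟶ Theta.mk (a + mg.card)) ≫ (sh a).map g' :=
      theta_hom_ext fun x => (hhfac x).symm
    rw [hfac, F.map_comp, Category.assoc]
    have hnat : F.map ((sh a).map g') ≫ π.app n = π.app mg ≫ (cokernel (iNat a F)).map g' := by
      have := π.naturality g'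
      exact this
    rw [reassoc_of% hnat]
    rw [show (cokernel (iNat a F)).map g' ≫ q = 0 from hq mg (min_le_left d n.card) g',
      comp_zero, comp_zero]

lemma foldr_del_concat (F : Theta ⥤ 𝒜) (l : List ℕ) (a : ℕ) :
    (l ++ [a]).foldr del F = l.foldr del (del a F) := by
  rw [List.foldr_append]
  rfl

lemma gen_sp : ∀ (d : ℕ) (F : Theta ⥤ 𝒜), Gen d F → StronglyPolynomialLE d F := by
  intro d
  induction d with
  | zero => exact fun F => gen_zero_sp
  | succ d ih =>
    intro F hgen l hl
    rcases List.eq_nil_or_concat l with rfl | ⟨l', a, rfl⟩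
    · simp at hl
    · have hlen : l'.length = d + 1 := by
        rw [List.concat_eq_append, List.length_append] at hl
        simpa using hl
      rw [List.concat_eq_append, foldr_del_concat]
      have hspa : StronglyPolynomialLE d (del a F) := by
        cases a with
        | zero =>
          intro l'' hl''
          exact isZero_foldr_of_isZero (isZero_del_zero F) l''
        | succ b => exact ih (del (b + 1) F) (gen_del hgen b)
      exact hspa l' hlen

/-! #### Finiteness of the small-cardinality set -/

lemma finite_small (d : ℕ) : Set.Finite {n : Theta | n.card ≤ d} := by
  have : {n : Theta | n.card ≤ d} = Theta.mk '' (Set.Iic d) := by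
    ext x
    constructor
    · intro hx
      exact ⟨x.card, hx, rfl⟩
    · rintro ⟨y, hy, rfl⟩
      exact hy
  rw [this]
  exact (Set.finite_Iic d).image _

end ThetaSupportProof

/-- a functor `F : Θ ⥤ 𝒜` is strongly polynomial of degree at most `d` iff
the sets of cardinality at most `d` form a support of `F`; in particular `F` is strongly
polynomial (of some degree) iff it has finite support. -/
theorem theta_stronglyPolynomial_iff_support
    {𝒜 : Type u} [Category.{v} 𝒜] [Abelian 𝒜] (F : Theta ⥤ 𝒜) :
    (∀ d : ℕ, StronglyPolynomialLE d F ↔ IsSupport {n : Theta | n.card ≤ d} F) ∧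
    ((∃ d : ℕ, StronglyPolynomialLE d F) ↔ ∃ S : Set Theta, S.Finite ∧ IsSupport S F) := by
  open ThetaSupportProof in
  constructor
  · intro d
    exact ⟨fun hsp => gen_isSupport (sp_gen hsp), fun hsupp => gen_sp d F (support_gen hsupp)⟩
  · constructor
    · rintro ⟨d, hsp⟩
      exact ⟨{n : Theta | n.card ≤ d}, finite_small d, gen_isSupport (sp_gen hsp)⟩
    · rintro ⟨S, hfin, hsupp⟩
      obtain ⟨d, hd⟩ := (hfin.image Theta.card).bddAbove
      refine ⟨d, gen_sp d F (support_gen ?_)⟩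
      intro G i hmono hiso
      apply hsupp G i hmono
      intro s hs
      exact hiso s (hd (Set.mem_image_of_mem _ hs))
end

section
/- Let ℳ be a small symmetric monoidal category whose unit 0 is an initial object, admitting a finite set T of objects such that every object of ℳ is a direct summand of a finite sum of elements of T, and let 𝒜 be an abelian category. Then every strongly polynomial functor F : ℳ → 𝒜 of degree at most d has as a support the finite set S_d = { a_1 + ⋯ + a_i : i ≤ d, a_j ∈ T } (with S_0 = {0}). In particular every strongly polynomial functor ℳ → 𝒜 has finite support. -/
open CategoryTheory CategoryTheory.Limits CategoryTheory.MonoidalCategory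
universe v u

variable {ℳ : Type v} [SmallCategory ℳ] [MonoidalCategory ℳ]
variable {𝒜 : Type u} [Category.{v} 𝒜]

/-- The canonical morphism `c → x ⊗ c` induced by the unique map `0 → x` from the
(initial) unit. -/
def unitIncl (hI : IsInitial (𝟙_ ℳ)) (x c : ℳ) : c ⟶ x ⊗ c :=
  (λ_ c).inv ≫ (hI.to x ▷ c)

/-- The natural transformation `i_x : F ⟶ τ_x F = F(x ⊗ −)`. -/
def iNatM (hI : IsInitial (𝟙_ ℳ)) (x : ℳ) (F : ℳ ⥤ 𝒜) : F ⟶ tensorLeft x ⋙ F where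
  app c := F.map (unitIncl hI x c)
  naturality := by
    intro c d f
    dsimp
    rw [← F.map_comp, ← F.map_comp]
    congr 1
    simp only [unitIncl, Category.assoc, ← whisker_exchange]
    rw [← leftUnitor_inv_naturality_assoc]

/-- `δ_x F`, the cokernel of `i_x : F ⟶ τ_x F`. -/
noncomputable def delM [Abelian 𝒜] (hI : IsInitial (𝟙_ ℳ)) (x : ℳ) (F : ℳ ⥤ 𝒜) :
    ℳ ⥤ 𝒜 :=
  cokernel (iNatM hI x F)

/-- `F` is strongly polynomial of degree at most `d` if every `(d+1)`-fold iterated `δ`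
of `F` vanishes. -/
noncomputable def StronglyPolynomialLEM [Abelian 𝒜] (hI : IsInitial (𝟙_ ℳ)) (d : ℕ)
    (F : ℳ ⥤ 𝒜) : Prop :=
  ∀ l : List ℳ, l.length = d + 1 → IsZero (l.foldr (delM hI) F)

/-- The monoidal sum of a finite list of objects. -/
def msum : List ℳ → ℳ := fun l => l.foldr (fun a b => a ⊗ b) (𝟙_ ℳ)

set_option linter.unusedSectionVars false

section Aux

variable [Abelian 𝒜] (hI : IsInitial (𝟙_ ℳ))

/-- If `i` is an isomorphism at `c`, the cokernel vanishes at `c`. -/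
lemma isZero_cokernel_obj_of_isIso_app {G F : ℳ ⥤ 𝒜} (i : G ⟶ F) (c : ℳ)
    (h : IsIso (i.app c)) : IsZero ((cokernel i).obj c) := by
  have hcond : i.app c ≫ (cokernel.π i).app c = 0 := by
    rw [← NatTrans.comp_app, cokernel.condition]; rfl
  have hz : (cokernel.π i).app c = 0 := by
    haveI := h
    rw [← cancel_epi (i.app c), hcond, comp_zero]
  exact IsZero.of_epi_eq_zero ((cokernel.π i).app c) hz

/-- If `H (x ⊗ c)` vanishes, then `(δ_x H) c` vanishes. -/
lemma isZero_delM_obj (x : ℳ) (H : ℳ ⥤ 𝒜) (c : ℳ) (h : IsZero (H.obj (x ⊗ c))) :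
    IsZero ((delM hI x H).obj c) := by
  have : IsZero ((tensorLeft x ⋙ H).obj c) := h
  have hz := IsZero.of_epi ((cokernel.π (iNatM hI x H)).app c) this
  exact hz

/-- The naturality square for `i_x`. -/
lemma iNatM_natSquare (x : ℳ) {F H : ℳ ⥤ 𝒜} (ψ : F ⟶ H) :
    iNatM hI x F ≫ Functor.whiskerLeft (tensorLeft x) ψ = ψ ≫ iNatM hI x H := by
  ext c
  exact (ψ.naturality (unitIncl hI x c))

/-- `δ_x` applied to a natural transformation. -/
noncomputable def delMap (x : ℳ) {F H : ℳ ⥤ 𝒜} (ψ : F ⟶ H) :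
    delM hI x F ⟶ delM hI x H :=
  cokernel.map (iNatM hI x F) (iNatM hI x H) ψ (Functor.whiskerLeft (tensorLeft x) ψ)
    (iNatM_natSquare hI x ψ)

lemma π_delMap (x : ℳ) {F H : ℳ ⥤ 𝒜} (ψ : F ⟶ H) :
    cokernel.π (iNatM hI x F) ≫ delMap hI x ψ
      = Functor.whiskerLeft (tensorLeft x) ψ ≫ cokernel.π (iNatM hI x H) :=
  cokernel.π_desc _ _ _

lemma epi_delMap (x : ℳ) {F H : ℳ ⥤ 𝒜} (ψ : F ⟶ H) [Epi ψ] : Epi (delMap hI x ψ) := by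
  haveI : ∀ c : ℳ, Epi ((Functor.whiskerLeft (tensorLeft x) ψ).app c) :=
    fun c => inferInstanceAs (Epi (ψ.app (x ⊗ c)))
  haveI : Epi (Functor.whiskerLeft (tensorLeft x) ψ) := NatTrans.epi_of_epi_app _
  haveI : Epi (cokernel.π (iNatM hI x F) ≫ delMap hI x ψ) := by
    rw [π_delMap]
    have hπ : Epi (cokernel.π (iNatM hI x H)) := coequalizer.π_epi
    exact @epi_comp _ _ _ _ _ _ inferInstance _ hπ
  exact epi_of_epi (cokernel.π (iNatM hI x F)) (delMap hI x ψ)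

lemma isIso_kernel_ι_of_eq_zero {X Y : 𝒜} (g : X ⟶ Y) (h : g = 0) : IsIso (kernel.ι g) := by
  subst h; infer_instance

/-- The kernel inclusion is an isomorphism at points where the target vanishes. -/
lemma isIso_kernel_ι_app {A B : ℳ ⥤ 𝒜} (φ : A ⟶ B) (s : ℳ) (h : IsZero (B.obj s)) :
    IsIso ((kernel.ι φ).app s) := by
  have e := kernelComparison_comp_ι φ ((evaluation ℳ 𝒜).obj s)
  haveI : IsIso (kernel.ι (((evaluation ℳ 𝒜).obj s).map φ)) := by
    apply isIso_kernel_ι_of_eq_zero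
    exact h.eq_zero_of_tgt _
  haveI : IsIso (kernelComparison φ ((evaluation ℳ 𝒜).obj s)) := inferInstance
  have : IsIso (kernelComparison φ ((evaluation ℳ 𝒜).obj s)
      ≫ kernel.ι (((evaluation ℳ 𝒜).obj s).map φ)) := inferInstance
  rw [e] at this
  exact this

/-- A functor vanishing at the unit whose canonical maps `H c → H (x ⊗ c)` are all
epimorphisms for `x ∈ T` vanishes everywhere, provided `T` weakly generates. -/
lemma isZero_obj_of_epis (T : Set ℳ)
    (hgen : ∀ x : ℳ, ∃ l : List ℳ, (∀ a ∈ l, a ∈ T) ∧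
      ∃ (i : x ⟶ msum l) (r : msum l ⟶ x), i ≫ r = 𝟙 x)
    (H : ℳ ⥤ 𝒜) (h0 : IsZero (H.obj (𝟙_ ℳ)))
    (hepi : ∀ x ∈ T, ∀ c : ℳ, Epi (H.map (unitIncl hI x c))) (y : ℳ) :
    IsZero (H.obj y) := by
  have hmsum : ∀ l : List ℳ, (∀ a ∈ l, a ∈ T) → IsZero (H.obj (msum l)) := by
    intro l
    induction l with
    | nil => intro _; exact h0
    | cons a l ih =>
      intro hmem
      haveI := hepi a (hmem a (by simp)) (msum l)
      have hz := IsZero.of_epi (H.map (unitIncl hI a (msum l)))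
        (ih fun b hb => hmem b (by simp [hb]))
      exact hz
  obtain ⟨l, hl, i, r, hir⟩ := hgen y
  rw [IsZero.iff_id_eq_zero]
  have hid : 𝟙 (H.obj y) = H.map i ≫ H.map r := by
    rw [← H.map_comp, hir, H.map_id]
  rw [hid, (hmsum l hl).eq_zero_of_tgt (H.map i), zero_comp]

/-- Key criterion: a mono which is iso at the unit and whose cokernel is killed by all
`δ_x`, `x ∈ T`, is an isomorphism. -/
lemma key (T : Set ℳ)
    (hgen : ∀ x : ℳ, ∃ l : List ℳ, (∀ a ∈ l, a ∈ T) ∧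
      ∃ (i : x ⟶ msum l) (r : msum l ⟶ x), i ≫ r = 𝟙 x)
    {G F : ℳ ⥤ 𝒜} (i : G ⟶ F) [Mono i]
    (h0 : IsIso (i.app (𝟙_ ℳ)))
    (hδ : ∀ x ∈ T, IsZero (delM hI x (cokernel i))) : IsIso i := by
  have hH : ∀ y : ℳ, IsZero ((cokernel i).obj y) := by
    apply isZero_obj_of_epis hI T hgen
    · exact isZero_cokernel_obj_of_isIso_app i _ h0
    · intro x hx c
      haveI : Epi (iNatM hI x (cokernel i)) :=
        Preadditive.epi_of_isZero_cokernel _ (hδ x hx)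
      exact inferInstanceAs (Epi ((iNatM hI x (cokernel i)).app c))
  have hzero : IsZero (cokernel i) := Functor.isZero _ hH
  haveI : Epi i := Preadditive.epi_of_isZero_cokernel i hzero
  exact isIso_of_mono_of_epi i

lemma support_of_sp (T : Set ℳ)
    (hgen : ∀ x : ℳ, ∃ l : List ℳ, (∀ a ∈ l, a ∈ T) ∧
      ∃ (i : x ⟶ msum l) (r : msum l ⟶ x), i ≫ r = 𝟙 x) :
    ∀ (d : ℕ) (F : ℳ ⥤ 𝒜), StronglyPolynomialLEM hI d F →
      IsSupport {y : ℳ | ∃ l : List ℳ, (∀ a ∈ l, a ∈ T) ∧ l.length ≤ d ∧ y = msum l} F := by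
  intro d
  induction d with
  | zero =>
    intro F hF G i hmono hiso
    haveI := hmono
    apply key hI T hgen i
    · exact hiso (𝟙_ ℳ) ⟨[], by simp, by simp, rfl⟩
    · intro x hx
      have hδF : IsZero (delM hI x F) := hF [x] rfl
      haveI : Epi (delMap hI x (cokernel.π i)) := epi_delMap hI x (cokernel.π i)
      exact IsZero.of_epi (delMap hI x (cokernel.π i)) hδF
  | succ d ih =>
    intro F hF G i hmono hiso
    haveI := hmono
    apply key hI T hgen i
    · exact hiso (𝟙_ ℳ) ⟨[], by simp, by simp, rfl⟩
    · intro x hx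
      set φ := delMap hI x (cokernel.π i) with hφ
      haveI hepi : Epi φ := epi_delMap hI x (cokernel.π i)
      have hsp : StronglyPolynomialLEM hI d (delM hI x F) := by
        intro l hl
        have h := hF (l ++ [x]) (by simp [hl])
        rwa [List.foldr_append] at h
      have hker : IsIso (kernel.ι φ) := by
        apply ih (delM hI x F) hsp _ (kernel.ι φ) inferInstance
        rintro s ⟨l, hlT, hld, rfl⟩
        apply isIso_kernel_ι_app
        apply isZero_delM_obj
        apply isZero_cokernel_obj_of_isIso_app i
        exact hiso (x ⊗ msum l)
          ⟨x :: l, fun b hb => by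
              rcases List.mem_cons.mp hb with rfl | hb'
              · exact hx
              · exact hlT b hb',
            by simpa using Nat.succ_le_succ hld, rfl⟩
      have hφ0 : φ = 0 := by
        haveI : Epi (kernel.ι φ) := by
          haveI := hker; infer_instance
        rw [← cancel_epi (kernel.ι φ), kernel.condition, comp_zero]
      exact IsZero.of_epi_eq_zero φ hφ0

lemma finite_msum_set (T : Set ℳ) (hT : T.Finite) (d : ℕ) :
    Set.Finite {y : ℳ | ∃ l : List ℳ, (∀ a ∈ l, a ∈ T) ∧ l.length ≤ d ∧ y = msum l} := by
  have hlists : ∀ d : ℕ, Set.Finite {l : List ℳ | (∀ a ∈ l, a ∈ T) ∧ l.length ≤ d} := by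
    intro d
    induction d with
    | zero =>
      apply Set.Finite.subset (Set.finite_singleton ([] : List ℳ))
      rintro l ⟨-, hlen⟩
      simp only [Nat.le_zero, List.length_eq_zero_iff] at hlen
      simp [hlen]
    | succ d ih =>
      apply Set.Finite.subset
        (Set.Finite.insert [] ((hT.prod ih).image (fun p => p.1 :: p.2)))
      rintro (_ | ⟨a, l⟩) ⟨hmem, hlen⟩
      · simp
      · right
        exact ⟨(a, l), ⟨hmem a (by simp),
          fun b hb => hmem b (by simp [hb]), Nat.le_of_succ_le_succ hlen⟩, rfl⟩
  apply Set.Finite.subset (Set.Finite.image msum (hlists d))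
  rintro y ⟨l, h1, h2, rfl⟩
  exact ⟨l, ⟨h1, h2⟩, rfl⟩

end Aux

/-- over a small symmetric monoidal category `ℳ` with initial unit and a
finite weak monoidal generating set `T`, every strongly polynomial functor of degree at
most `d` has the finite set `S_d` of sums of at most `d` elements of `T` as a support. -/
theorem stronglyPolynomial_support
    {ℳ : Type v} [SmallCategory ℳ] [MonoidalCategory ℳ] [SymmetricCategory ℳ]
    (hI : IsInitial (𝟙_ ℳ)) {𝒜 : Type u} [Category.{v} 𝒜] [Abelian 𝒜]
    (T : Set ℳ) (hTfin : T.Finite)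
    (hgen : ∀ x : ℳ, ∃ l : List ℳ, (∀ a ∈ l, a ∈ T) ∧
      ∃ (i : x ⟶ msum l) (r : msum l ⟶ x), i ≫ r = 𝟙 x)
    (d : ℕ) (F : ℳ ⥤ 𝒜) (hF : StronglyPolynomialLEM hI d F) :
    IsSupport {y : ℳ | ∃ l : List ℳ, (∀ a ∈ l, a ∈ T) ∧ l.length ≤ d ∧ y = msum l} F ∧
    Set.Finite {y : ℳ | ∃ l : List ℳ, (∀ a ∈ l, a ∈ T) ∧ l.length ≤ d ∧ y = msum l} :=
  ⟨support_of_sp hI T hgen d F hF, finite_msum_set T hTfin d⟩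
end
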